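/- Let E = F[t] be a finite field extension of degree k generated by an element t. Then every nonzero element of E can be written as f(t)/g(t) where f and g are polynomials over F of degree at most k/2. -/

import Mathlib

open Polynomial Module

/-- Evaluation of coefficient vectors at `t`, as a linear map. -/
noncomputable def stmt0_eval (F E : Type*) [Field F] [Field E] [Algebra F E]
    (t : E) (m : ℕ) : (Fin m → F) →ₗ[F] E where
  toFun a := ∑ i, a i • t ^ (i : ℕ)
  map_add' a b := by simp [add_smul, Finset.sum_add_distrib]
  map_smul' c a := by simp [smul_smul, Finset.smul_sum]

lemma stmt0_aeval (F E : Type*) [Field F] [Field E] [Algebra F E]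
    (t : E) (m : ℕ) (a : Fin m → F) :
    Polynomial.aeval t (∑ i : Fin m, Polynomial.C (a i) * Polynomial.X ^ (i : ℕ))
      = ∑ i : Fin m, a i • t ^ (i : ℕ) := by
  simp [Algebra.smul_def]

lemma stmt0_natDegree (F : Type*) [Field F] (m : ℕ) (a : Fin m → F) :
    (∑ i : Fin m, Polynomial.C (a i) * Polynomial.X ^ (i : ℕ)).natDegree ≤ m - 1 := by
  refine Polynomial.natDegree_sum_le_of_forall_le _ _ fun i _ => ?_
  refine le_trans (Polynomial.natDegree_C_mul_le _ _) ?_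
  rw [Polynomial.natDegree_X_pow]
  omega

/-- Lemma 10: if `E = F[t]` is a finite field extension of degree `k`, every nonzero
element of `E` can be written as `f(t)/g(t)` with `f, g` polynomials of degree `≤ k/2`. -/
theorem stmt_0 (F E : Type*) [Field F] [Field E] [Algebra F E]
    [FiniteDimensional F E] (t : E) (ht : Algebra.adjoin F {t} = ⊤)
    (k : ℕ) (hk : k = Module.finrank F E) :
    ∀ e : E, e ≠ 0 → ∃ f g : Polynomial F,
      2 * f.natDegree ≤ k ∧ 2 * g.natDegree ≤ k ∧
      Polynomial.aeval t g ≠ 0 ∧ e = Polynomial.aeval t f / Polynomial.aeval t g := by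
  intro e he
  have hkpos : 0 < k := hk ▸ Module.finrank_pos
  have hint : IsIntegral F t := IsIntegral.of_finite F t
  -- the minimal polynomial of t has degree k
  have htop : IntermediateField.adjoin F {t} = ⊤ := by
    have h1 : Algebra.adjoin F {t} ≤ (IntermediateField.adjoin F {t}).toSubalgebra :=
      IntermediateField.algebra_adjoin_le_adjoin F {t}
    rw [ht, top_le_iff] at h1
    exact IntermediateField.toSubalgebra_injective (by simp [h1, ht])
  have hmp : (minpoly F t).natDegree = k := by
    rw [← IntermediateField.adjoin.finrank hint, htop, hk]
    exact (IntermediateField.topEquiv (F := F) (E := E)).toLinearEquiv.finrank_eq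
  -- any nonzero polynomial of natDegree ≤ k/2 does not vanish at t
  have key : ∀ p : Polynomial F, p.natDegree ≤ k / 2 → Polynomial.aeval t p = 0 → p = 0 := by
    intro p hdeg hval
    by_contra hp
    have := Polynomial.natDegree_le_natDegree (minpoly.degree_le_of_ne_zero F t hp hval)
    omega
  set m := k / 2 + 1 with hm
  -- linear map with nontrivial kernel
  let φ : ((Fin m → F) × (Fin m → F)) →ₗ[F] E :=
    (stmt0_eval F E t m).comp (LinearMap.fst F _ _)
      - (LinearMap.mulLeft F e).comp ((stmt0_eval F E t m).comp (LinearMap.snd F _ _))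
  have hdim : Module.finrank F E < Module.finrank F ((Fin m → F) × (Fin m → F)) := by
    rw [Module.finrank_prod, Module.finrank_pi, Fintype.card_fin, ← hk]
    omega
  obtain ⟨⟨a, b⟩, hab, habne⟩ :=
    Submodule.exists_mem_ne_zero_of_ne_bot (LinearMap.ker_ne_bot_of_finrank_lt (f := φ) hdim)
  have hker : ∑ i : Fin m, a i • t ^ (i : ℕ) = e * ∑ i : Fin m, b i • t ^ (i : ℕ) := by
    have := hab
    simp only [φ, LinearMap.mem_ker, LinearMap.sub_apply, LinearMap.comp_apply,
      LinearMap.fst_apply, LinearMap.snd_apply, LinearMap.mulLeft_apply,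
      sub_eq_zero, stmt0_eval] at this
    exact this
  set f := ∑ i : Fin m, Polynomial.C (a i) * Polynomial.X ^ (i : ℕ) with hf
  set g := ∑ i : Fin m, Polynomial.C (b i) * Polynomial.X ^ (i : ℕ) with hg
  have hfd : f.natDegree ≤ k / 2 := by rw [hf]; have := stmt0_natDegree F m a; omega
  have hgd : g.natDegree ≤ k / 2 := by rw [hg]; have := stmt0_natDegree F m b; omega
  have hfe : Polynomial.aeval t f = e * Polynomial.aeval t g := by
    rw [hf, hg, stmt0_aeval, stmt0_aeval]; exact hker
  have hgne : Polynomial.aeval t g ≠ 0 := by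
    intro h0
    have hg0 : g = 0 := key g hgd h0
    have hf0 : f = 0 := key f hfd (by rw [hfe, h0, mul_zero])
    -- then a = 0 and b = 0, contradiction
    apply habne
    have ha : a = 0 := by
      funext i
      have := congrArg (fun p => Polynomial.coeff p (i : ℕ)) hf0
      simp only [hf, Polynomial.finset_sum_coeff, Polynomial.coeff_C_mul,
        Polynomial.coeff_X_pow, Polynomial.coeff_zero] at this
      rw [Finset.sum_eq_single i] at this
      · simpa using this
      · intro j _ hji
        simp [show ¬((i:ℕ) = (j:ℕ)) from fun h => hji (Fin.val_injective h).symm]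
      · simp
    have hb : b = 0 := by
      funext i
      have := congrArg (fun p => Polynomial.coeff p (i : ℕ)) hg0
      simp only [hg, Polynomial.finset_sum_coeff, Polynomial.coeff_C_mul,
        Polynomial.coeff_X_pow, Polynomial.coeff_zero] at this
      rw [Finset.sum_eq_single i] at this
      · simpa using this
      · intro j _ hji
        simp [show ¬((i:ℕ) = (j:ℕ)) from fun h => hji (Fin.val_injective h).symm]
      · simp
    simp [ha, hb]
  exact ⟨f, g, by omega, by omega, hgne, by field_simp [hfe]; exact hfe.symm⟩
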